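/- Assume that for every x ∈ ℝ³ the map u ↦ f(x,u)/u³ is nondecreasing on (0,∞) and nonincreasing on (−∞,0). Then, with 𝓕(x,u) := u f(x,u) − 4F(x,u), one has 𝓕(x,u) ≥ 𝓕(x,τu) for all (x,u) ∈ ℝ³ × ℝ and all τ ∈ [0,1]; in other words f satisfies condition (f4) with θ = 1. -/
import Mathlib


open MeasureTheory Filter Topology

noncomputable section

/-- Euclidean space `ℝ³`. -/
abbrev R3 : Type := EuclideanSpace ℝ (Fin 3)

/-- `F(x,u) = ∫₀ᵘ f(x,η) dη`. -/
def Fprim (f : R3 → ℝ → ℝ) (x : R3) (u : ℝ) : ℝ := ∫ η in (0:ℝ)..u, f x η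

/-- (f4') implies (f4) with `θ = 1`: with `𝓕(x,u) = u f(x,u) − 4F(x,u)`,
one has `𝓕(x,τu) ≤ 𝓕(x,u)` for all `τ ∈ [0,1]`. -/
theorem f4'_implies_f4
    (f : R3 → ℝ → ℝ) (hf : Continuous (fun p : R3 × ℝ => f p.1 p.2))
    (hmono_pos : ∀ x : R3, ∀ u v : ℝ, 0 < u → u ≤ v → f x u / u^3 ≤ f x v / v^3)
    (hmono_neg : ∀ x : R3, ∀ u v : ℝ, u ≤ v → v < 0 → f x v / v^3 ≤ f x u / u^3) :
    ∀ (x : R3) (u : ℝ), ∀ τ ∈ Set.Icc (0:ℝ) 1,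
      (τ*u) * f x (τ*u) - 4 * Fprim f x (τ*u) ≤ u * f x u - 4 * Fprim f x u := by
  intro x u τ hτ
  obtain ⟨hτ0, hτ1⟩ := hτ
  have hcont : Continuous (f x) := hf.comp (Continuous.prodMk_right x)
  have hInt : ∀ a b : ℝ, IntervalIntegrable (f x) volume a b :=
    fun a b => hcont.intervalIntegrable a b
  have hae0 : ∀ a b : ℝ, ∀ᵐ s ∂(volume.restrict (Set.Icc a b)), s ≠ (0:ℝ) := by
    intro a b
    refine ae_mono Measure.restrict_le_self ?_
    have : (volume : Measure ℝ) {s : ℝ | ¬ s ≠ 0} = 0 := by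
      simp [Set.setOf_eq_eq_singleton']
    exact (ae_iff).mpr this
  rcases lt_trichotomy u 0 with hu | hu | hu
  · -- u < 0
    obtain ⟨C, hC⟩ : ∃ c : ℝ, c = f x u / u ^ 3 := ⟨_, rfl⟩
    have huτ : u ≤ τ * u := by nlinarith
    have hτu0 : τ * u ≤ 0 := mul_nonpos_of_nonneg_of_nonpos hτ0 hu.le
    have hCu4 : C * u ^ 4 = u * f x u := by
      rw [hC, div_mul_eq_mul_div, div_eq_iff (pow_ne_zero 3 hu.ne)]; ring
    have hmem := ae_restrict_mem (μ := volume) (measurableSet_Icc (a := u) (b := τ*u))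
    have hae : ∀ᵐ s ∂(volume.restrict (Set.Icc u (τ*u))), C * s ^ 3 ≤ f x s := by
      filter_upwards [hae0 u (τ*u), hmem] with s hs hsmem
      have hs0 : s < 0 := lt_of_le_of_ne (hsmem.2.trans hτu0) hs
      have h1 := hmono_neg x u s hsmem.1 hs0
      have hs3 : s ^ 3 < 0 := Odd.pow_neg (by decide) hs0
      have h2 : (f x u / u ^ 3) * s ^ 3 ≤ (f x s / s ^ 3) * s ^ 3 :=
        mul_le_mul_of_nonpos_right h1 hs3.le
      rw [div_mul_cancel₀ _ hs3.ne] at h2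
      rw [hC]
      linarith
    have hIcalc : (∫ s in u..(τ*u), C * s ^ 3) = C * ((τ*u) ^ 4 - u ^ 4) / 4 := by
      rw [intervalIntegral.integral_const_mul, integral_pow]
      norm_num
      ring
    have hIbound : C * ((τ*u) ^ 4 - u ^ 4) / 4 ≤ ∫ s in u..(τ*u), f x s := by
      rw [← hIcalc]
      exact intervalIntegral.integral_mono_ae_restrict (μ := volume) huτ
        ((continuous_const.mul (continuous_pow 3)).intervalIntegrable u (τ*u))
        (hInt u (τ*u)) hae
    have hFdiff : Fprim f x (τ*u) - Fprim f x u = ∫ s in u..(τ*u), f x s := by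
      unfold Fprim
      rw [intervalIntegral.integral_interval_sub_left (hInt 0 (τ*u)) (hInt 0 u)]
    have hstep : (τ*u) * f x (τ*u) ≤ C * (τ*u) ^ 4 := by
      rcases eq_or_lt_of_le hτu0 with h | h
      · rw [h]; simp
      · have h1 := hmono_neg x u (τ*u) huτ h
        rw [← hC] at h1
        have h4 : (0:ℝ) < (τ*u) ^ 4 := Even.pow_pos (by decide) h.ne
        have h2 := mul_le_mul_of_nonneg_right h1 h4.le
        have hne : ((τ*u) : ℝ) ^ 3 ≠ 0 := pow_ne_zero 3 h.ne
        have h3 : f x (τ*u) / (τ*u) ^ 3 * (τ*u) ^ 4 = (τ*u) * f x (τ*u) := by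
          rw [div_mul_eq_mul_div, div_eq_iff hne]; ring
        rw [h3] at h2
        linarith
    linarith [hFdiff ▸ hIbound]
  · simp [hu]
  · -- u > 0
    obtain ⟨C, hC⟩ : ∃ c : ℝ, c = f x u / u ^ 3 := ⟨_, rfl⟩
    have huτ : τ * u ≤ u := by nlinarith
    have hτu0 : 0 ≤ τ * u := mul_nonneg hτ0 hu.le
    have hCu4 : C * u ^ 4 = u * f x u := by
      rw [hC, div_mul_eq_mul_div, div_eq_iff (pow_ne_zero 3 hu.ne')]; ring
    have hmem := ae_restrict_mem (μ := volume) (measurableSet_Icc (a := τ*u) (b := u))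
    have hae : ∀ᵐ s ∂(volume.restrict (Set.Icc (τ*u) u)), f x s ≤ C * s ^ 3 := by
      filter_upwards [hae0 (τ*u) u, hmem] with s hs hsmem
      have hs0 : 0 < s := lt_of_le_of_ne (hτu0.trans hsmem.1) (Ne.symm hs)
      have h1 := hmono_pos x s u hs0 hsmem.2
      have hs3 : (0:ℝ) < s ^ 3 := by positivity
      have h2 : (f x s / s ^ 3) * s ^ 3 ≤ (f x u / u ^ 3) * s ^ 3 :=
        mul_le_mul_of_nonneg_right h1 hs3.le
      rw [div_mul_cancel₀ _ hs3.ne'] at h2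
      rw [hC]
      linarith
    have hIcalc : (∫ s in (τ*u)..u, C * s ^ 3) = C * (u ^ 4 - (τ*u) ^ 4) / 4 := by
      rw [intervalIntegral.integral_const_mul, integral_pow]
      norm_num
      ring
    have hIbound : (∫ s in (τ*u)..u, f x s) ≤ C * (u ^ 4 - (τ*u) ^ 4) / 4 := by
      rw [← hIcalc]
      exact intervalIntegral.integral_mono_ae_restrict (μ := volume) huτ
        (hInt (τ*u) u)
        ((continuous_const.mul (continuous_pow 3)).intervalIntegrable (τ*u) u) hae
    have hFdiff : Fprim f x u - Fprim f x (τ*u) = ∫ s in (τ*u)..u, f x s := by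
      unfold Fprim
      rw [intervalIntegral.integral_interval_sub_left (hInt 0 u) (hInt 0 (τ*u))]
    have hstep : (τ*u) * f x (τ*u) ≤ C * (τ*u) ^ 4 := by
      rcases eq_or_lt_of_le hτu0 with h | h
      · rw [← h]; simp
      · have h1 := hmono_pos x (τ*u) u h huτ
        rw [← hC] at h1
        have h4 : (0:ℝ) < (τ*u) ^ 4 := Even.pow_pos (by decide) h.ne'
        have h2 := mul_le_mul_of_nonneg_right h1 h4.le
        have hne : ((τ*u) : ℝ) ^ 3 ≠ 0 := pow_ne_zero 3 h.ne'
        have h3 : f x (τ*u) / (τ*u) ^ 3 * (τ*u) ^ 4 = (τ*u) * f x (τ*u) := by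
          rw [div_mul_eq_mul_div, div_eq_iff hne]; ring
        rw [h3] at h2
        linarith
    linarith [hFdiff ▸ hIbound]
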